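/- arXiv:2508.02501 — 4 statements merged into one kernel-verified Lean document; each statement's English description precedes it below -/
import Mathlib

section
/- Let G be a group, d a pseudometric on G, and ν : G → ℝ a quasi-morphism with defect D(ν). Let λ > 0 and suppose ν is λ-Lipschitz with respect to d, i.e. |ν(g) − ν(g')| ≤ λ·d(g, g') for all g, g' ∈ G. Let H ≤ G be a subgroup on which ν vanishes identically. Then for all g, g' ∈ G the induced pseudodistance between the cosets gH and g'H satisfies (1/λ)·|ν(g) − ν(g')| − 2·D(ν)/λ ≤ inf { d(g·h, g'·h') : h, h' ∈ H }. -/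
/-- Let `G` be a group, `d` a pseudometric on `G`, and `ν : G → ℝ` a
quasi-morphism with defect `D`. Let `λ > 0` and suppose `ν` is `λ`-Lipschitz with
respect to `d`. Let `H ≤ G` be a subgroup on which `ν` vanishes identically. Then for
all `g, g' ∈ G` the induced pseudodistance between the cosets `gH` and `g'H` satisfies
`(1/λ)·|ν(g) − ν(g')| − 2·D/λ ≤ inf { d(g·h, g'·h') : h, h' ∈ H }`. -/
theorem stmt_1 {G : Type*} [Group G] (d : G → G → ℝ)
    (hd_nonneg : ∀ a b : G, 0 ≤ d a b)
    (hd_refl : ∀ a : G, d a a = 0)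
    (hd_symm : ∀ a b : G, d a b = d b a)
    (hd_tri : ∀ a b c : G, d a c ≤ d a b + d b c)
    (ν : G → ℝ) (D : ℝ)
    (hD : ∀ a b : G, |ν (a * b) - ν a - ν b| ≤ D)
    (lam : ℝ) (hlam : 0 < lam)
    (hLip : ∀ g g' : G, |ν g - ν g'| ≤ lam * d g g')
    (H : Subgroup G) (hH : ∀ h ∈ H, ν h = 0) :
    ∀ g g' : G,
      (1 / lam) * |ν g - ν g'| - 2 * D / lam ≤
        sInf {r : ℝ | ∃ h ∈ H, ∃ h' ∈ H, r = d (g * h) (g' * h')} := by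
  intro g g'
  refine le_csInf ⟨d (g*1) (g'*1), 1, H.one_mem, 1, H.one_mem, rfl⟩ ?_
  rintro r ⟨h, hh, h', hh', rfl⟩
  have e1 : |ν (g*h) - ν g| ≤ D := by
    have := hD g h; rw [hH h hh] at this; simpa using this
  have e2 : |ν (g'*h') - ν g'| ≤ D := by
    have := hD g' h'; rw [hH h' hh'] at this; simpa using this
  have key : |ν g - ν g'| ≤ lam * d (g*h) (g'*h') + 2*D := by
    have := hLip (g*h) (g'*h')
    have habs : |ν g - ν g'| ≤ |ν (g*h) - ν (g'*h')| + |ν (g*h) - ν g| + |ν (g'*h') - ν g'| := by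
      have := abs_sub_abs_le_abs_sub (ν g - ν g') (ν (g*h) - ν (g'*h'))
      calc |ν g - ν g'| = |(ν (g*h) - ν (g'*h')) - ((ν (g*h) - ν g) - (ν (g'*h') - ν g'))| := by ring_nf
        _ ≤ |ν (g*h) - ν (g'*h')| + |(ν (g*h) - ν g) - (ν (g'*h') - ν g')| := abs_sub _ _
        _ ≤ |ν (g*h) - ν (g'*h')| + (|ν (g*h) - ν g| + |ν (g'*h') - ν g'|) := by
            gcongr; exact abs_sub _ _
        _ = _ := by ring
    linarith
  have h2 : (1/lam)*|ν g - ν g'| - 2*D/lam = (|ν g - ν g'| - 2*D)/lam := by ring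
  rw [h2, div_le_iff₀ hlam]
  nlinarith [key]
end

section
/- Let G be a group, d a biinvariant pseudometric on G, λ > 0, and ν : G → ℝ a function which is λ-Lipschitz with respect to d, i.e. |ν(g) − ν(g')| ≤ λ·d(g, g') for all g, g' ∈ G. Suppose ν_∞ : G → ℝ is a function such that for every a ∈ G the sequence ν(aⁿ)/n converges to ν_∞(a) as n → ∞. Then ν_∞ is also λ-Lipschitz with respect to d, i.e. |ν_∞(a) − ν_∞(b)| ≤ λ·d(a, b) for all a, b ∈ G. -/
open Filter

/-- Let `G` be a group, `d` a biinvariant pseudometric on `G`, `λ > 0`,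
and `ν : G → ℝ` a function which is `λ`-Lipschitz with respect to `d`. Suppose
`ν∞ : G → ℝ` is a function such that for every `a ∈ G` the sequence `ν(aⁿ)/n`
converges to `ν∞(a)` as `n → ∞`. Then `ν∞` is also `λ`-Lipschitz with respect to
`d`. -/
theorem stmt_4 {G : Type*} [Group G] (d : G → G → ℝ)
    (hd_nonneg : ∀ a b : G, 0 ≤ d a b)
    (hd_refl : ∀ a : G, d a a = 0)
    (hd_symm : ∀ a b : G, d a b = d b a)
    (hd_tri : ∀ a b c : G, d a c ≤ d a b + d b c)
    (hd_left : ∀ x a b : G, d (x * a) (x * b) = d a b)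
    (hd_right : ∀ x a b : G, d (a * x) (b * x) = d a b)
    (lam : ℝ) (hlam : 0 < lam)
    (ν : G → ℝ)
    (hLip : ∀ g g' : G, |ν g - ν g'| ≤ lam * d g g')
    (νinf : G → ℝ)
    (hνinf : ∀ a : G,
      Tendsto (fun n : ℕ => ν (a ^ n) / (n : ℝ)) atTop (nhds (νinf a))) :
    ∀ a b : G, |νinf a - νinf b| ≤ lam * d a b := by
  intro a b
  have hpow : ∀ n : ℕ, d (a ^ n) (b ^ n) ≤ n * d a b := by
    intro n
    induction n with
    | zero => simp [hd_refl]
    | succ n ih =>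
      have h1 : d (a ^ (n + 1)) (b ^ (n + 1)) ≤ d (a * a ^ n) (b * a ^ n) + d (b * a ^ n) (b * b ^ n) := by
        rw [pow_succ', pow_succ']
        exact hd_tri _ _ _
      rw [hd_right, hd_left] at h1
      push_cast
      nlinarith
  have hT : Tendsto (fun n : ℕ => ν (a ^ n) / (n : ℝ) - ν (b ^ n) / (n : ℝ)) atTop
      (nhds (νinf a - νinf b)) := (hνinf a).sub (hνinf b)
  have habs : Tendsto (fun n : ℕ => |ν (a ^ n) / (n : ℝ) - ν (b ^ n) / (n : ℝ)|) atTop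
      (nhds |νinf a - νinf b|) := hT.abs
  refine le_of_tendsto habs ?_
  filter_upwards [eventually_ge_atTop 1] with n hn
  have hn' : (0 : ℝ) < n := by exact_mod_cast hn
  rw [div_sub_div_same, abs_div, abs_of_pos hn', div_le_iff₀ hn']
  calc |ν (a ^ n) - ν (b ^ n)| ≤ lam * d (a ^ n) (b ^ n) := hLip _ _
    _ ≤ lam * (n * d a b) := by
        exact mul_le_mul_of_nonneg_left (hpow n) hlam.le
    _ = lam * d a b * n := by ring
end

section
/- Let G be a group with identity element e, and let c : G → ℝ be a quasi-morphism with defect D(c). Let ℓ : G → ℝ be a function satisfying ℓ(g) ≤ c(g) for all g ∈ G, and the positivity property ℓ(g) + ℓ(g⁻¹) ≥ 0 for all g ∈ G. Then for every g ∈ G one has c(g) − c(e) − D(c) ≤ ℓ(g) ≤ c(g). In particular, the function c − ℓ is bounded on G. -/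
/-- Let `G` be a group with identity `1`, and let `c : G → ℝ` be a
quasi-morphism with defect `D`. Let `ℓ : G → ℝ` be a function satisfying `ℓ(g) ≤ c(g)`
for all `g ∈ G`, and the positivity property `ℓ(g) + ℓ(g⁻¹) ≥ 0` for all `g ∈ G`. Then
for every `g ∈ G` one has `c(g) − c(1) − D ≤ ℓ(g) ≤ c(g)`. In particular, the function
`c − ℓ` is bounded on `G`. -/
theorem stmt_6 {G : Type*} [Group G] (c : G → ℝ) (D : ℝ)
    (hD : ∀ a b : G, |c (a * b) - c a - c b| ≤ D)
    (ℓ : G → ℝ)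
    (hle : ∀ g : G, ℓ g ≤ c g)
    (hpos : ∀ g : G, ℓ g + ℓ g⁻¹ ≥ 0) :
    (∀ g : G, c g - c 1 - D ≤ ℓ g ∧ ℓ g ≤ c g) ∧
      ∃ B : ℝ, ∀ g : G, |c g - ℓ g| ≤ B := by
  have key : ∀ g : G, c g - c 1 - D ≤ ℓ g := by
    intro g
    have h1 := abs_le.1 (hD g g⁻¹)
    rw [mul_inv_cancel] at h1
    have h2 := hpos g
    have h3 := hle g⁻¹
    linarith [h1.1, h1.2]
  refine ⟨fun g => ⟨key g, hle g⟩, |c 1 + D|, fun g => ?_⟩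
  have h1 := key g
  have h2 := hle g
  rw [abs_le]
  constructor <;> [skip; skip] <;>
    cases abs_le.1 (le_refl |c 1 + D|) <;> linarith [le_abs_self (c 1 + D), neg_abs_le (c 1 + D)]
end

section
/- Let G be a group with identity e, d a biinvariant pseudometric on G, H ≤ G a subgroup, and ν : G → ℝ a quasi-morphism with defect D(ν) which is 2-Lipschitz with respect to d (i.e. |ν(g) − ν(g')| ≤ 2·d(g, g') for all g, g' ∈ G) and which vanishes identically on H. Let φ : ℝ → G be a group homomorphism from the additive group of reals such that ν(φ(t)) = t and d(e, φ(t)) ≤ |t| for all t ∈ ℝ. Then for all s, t ∈ ℝ the induced pseudodistance between the cosets φ(s)H and φ(t)H satisfies (1/2)·|s − t| − D(ν) ≤ inf { d(φ(s)·h, φ(t)·h') : h, h' ∈ H } ≤ |s − t|. In particular, the homogeneous space G/H with the induced pseudometric contains a quasi-isometric copy of ℝ and has infinite diameter. -/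
/-- Let `G` be a group with identity `1`, `d` a biinvariant pseudometric
on `G`, `H ≤ G` a subgroup, and `ν : G → ℝ` a quasi-morphism with defect `D` which is
`2`-Lipschitz with respect to `d` and which vanishes identically on `H`. Let
`φ : ℝ → G` be a group homomorphism from the additive group of reals such that
`ν(φ(t)) = t` and `d(1, φ(t)) ≤ |t|` for all `t ∈ ℝ`. Then for all `s, t ∈ ℝ` the
induced pseudodistance between the cosets `φ(s)H` and `φ(t)H` satisfies
`(1/2)·|s − t| − D ≤ inf { d(φ(s)·h, φ(t)·h') : h, h' ∈ H } ≤ |s − t|`. In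
particular, the homogeneous space `G/H` with the induced pseudometric contains a
quasi-isometric copy of `ℝ` and has infinite diameter. -/
theorem stmt_9 {G : Type*} [Group G] (d : G → G → ℝ)
    (hd_nonneg : ∀ a b : G, 0 ≤ d a b)
    (hd_refl : ∀ a : G, d a a = 0)
    (hd_symm : ∀ a b : G, d a b = d b a)
    (hd_tri : ∀ a b c : G, d a c ≤ d a b + d b c)
    (hd_left : ∀ x a b : G, d (x * a) (x * b) = d a b)
    (hd_right : ∀ x a b : G, d (a * x) (b * x) = d a b)
    (H : Subgroup G)
    (ν : G → ℝ) (D : ℝ)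
    (hD : ∀ a b : G, |ν (a * b) - ν a - ν b| ≤ D)
    (hLip : ∀ g g' : G, |ν g - ν g'| ≤ 2 * d g g')
    (hH : ∀ h ∈ H, ν h = 0)
    (φ : ℝ → G)
    (hφ : ∀ s t : ℝ, φ (s + t) = φ s * φ t)
    (hν : ∀ t : ℝ, ν (φ t) = t)
    (hφd : ∀ t : ℝ, d 1 (φ t) ≤ |t|) :
    (∀ s t : ℝ,
        (1 / 2) * |s - t| - D ≤
            sInf {r : ℝ | ∃ h ∈ H, ∃ h' ∈ H, r = d (φ s * h) (φ t * h')} ∧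
          sInf {r : ℝ | ∃ h ∈ H, ∃ h' ∈ H, r = d (φ s * h) (φ t * h')} ≤ |s - t|) ∧
      ∀ R : ℝ, ∃ g g' : G,
        R ≤ sInf {r : ℝ | ∃ h ∈ H, ∃ h' ∈ H, r = d (g * h) (g' * h')} := by
  have hφ0 : φ 0 = 1 := by
    have := hφ 0 0
    rw [add_zero] at this
    exact (left_eq_mul.mp this)
  have hDnn : 0 ≤ D := by
    have := hD 1 1
    have h1 : ν (1 : G) = 0 := by simpa [hφ0] using hν 0
    simp [h1] at this
    linarith [abs_nonneg (ν ((1:G)*1)), this]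
  -- lower bound for every element of the set
  have key : ∀ s t : ℝ, ∀ r ∈ {r : ℝ | ∃ h ∈ H, ∃ h' ∈ H, r = d (φ s * h) (φ t * h')},
      (1 / 2) * |s - t| - D ≤ r := by
    rintro s t r ⟨h, hh, h', hh', rfl⟩
    have e1 : |ν (φ s * h) - s| ≤ D := by
      have := hD (φ s) h
      rwa [hν, hH h hh, sub_zero] at this
    have e2 : |ν (φ t * h') - t| ≤ D := by
      have := hD (φ t) h'
      rwa [hν, hH h' hh', sub_zero] at this
    have e3 := hLip (φ s * h) (φ t * h')
    have h4 : |s - t| ≤ |ν (φ s * h) - ν (φ t * h')| + 2 * D := by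
      have := abs_sub_abs_le_abs_sub (s - t) (ν (φ s * h) - ν (φ t * h'))
      have h5 : |s - t - (ν (φ s * h) - ν (φ t * h'))| ≤ 2 * D := by
        have : s - t - (ν (φ s * h) - ν (φ t * h')) =
            -(ν (φ s * h) - s) + (ν (φ t * h') - t) := by ring
        rw [this]
        calc |_| ≤ |(-(ν (φ s * h) - s))| + |ν (φ t * h') - t| := abs_add_le _ _
          _ ≤ D + D := by rw [abs_neg]; exact add_le_add e1 e2
          _ = 2 * D := by ring
      linarith
    linarith
  have hne : ∀ s t : ℝ, ({r : ℝ | ∃ h ∈ H, ∃ h' ∈ H, r = d (φ s * h) (φ t * h')}).Nonempty :=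
    fun s t => ⟨d (φ s * 1) (φ t * 1), 1, H.one_mem, 1, H.one_mem, rfl⟩
  have hbdd : ∀ s t : ℝ, BddBelow {r : ℝ | ∃ h ∈ H, ∃ h' ∈ H, r = d (φ s * h) (φ t * h')} :=
    fun s t => ⟨(1 / 2) * |s - t| - D, fun r hr => key s t r hr⟩
  have main : ∀ s t : ℝ,
        (1 / 2) * |s - t| - D ≤
            sInf {r : ℝ | ∃ h ∈ H, ∃ h' ∈ H, r = d (φ s * h) (φ t * h')} ∧
          sInf {r : ℝ | ∃ h ∈ H, ∃ h' ∈ H, r = d (φ s * h) (φ t * h')} ≤ |s - t| := by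
    intro s t
    constructor
    · exact le_csInf (hne s t) (key s t)
    · have hmem : d (φ s * 1) (φ t * 1) ∈
          {r : ℝ | ∃ h ∈ H, ∃ h' ∈ H, r = d (φ s * h) (φ t * h')} :=
        ⟨1, H.one_mem, 1, H.one_mem, rfl⟩
      refine le_trans (csInf_le (hbdd s t) hmem) ?_
      have h1 : d (φ s * 1) (φ t * 1) = d 1 (φ (t - s)) := by
        rw [mul_one, mul_one]
        have : d (φ s) (φ t) = d ((φ s)⁻¹ * φ s) ((φ s)⁻¹ * φ t) := (hd_left _ _ _).symm
        rw [this, inv_mul_cancel]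
        congr 1
        have hinv : (φ s)⁻¹ = φ (-s) := by
          have := hφ s (-s)
          rw [add_neg_cancel, hφ0] at this
          exact (eq_inv_of_mul_eq_one_right this.symm).symm
        rw [hinv, ← hφ]
        ring_nf
      rw [h1]
      calc d 1 (φ (t - s)) ≤ |t - s| := hφd _
        _ = |s - t| := abs_sub_comm t s
  refine ⟨main, fun R => ?_⟩
  refine ⟨φ (2 * |R| + 2 * D), φ 0, ?_⟩
  have := (main (2 * |R| + 2 * D) 0).1
  have habs : |2 * |R| + 2 * D - 0| = 2 * |R| + 2 * D := by
    rw [sub_zero, abs_of_nonneg]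
    positivity
  rw [habs] at this
  have : |R| ≤ sInf {r : ℝ | ∃ h ∈ H, ∃ h' ∈ H,
      r = d (φ (2 * |R| + 2 * D) * h) (φ 0 * h')} := by linarith
  exact le_trans (le_abs_self R) this
end
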